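/- Let g be the 2-step nilpotent Lie algebra with complex coframe η^1,…,η^4 of (1,0)-forms satisfying dη^i = 0 for i = 1,2,3 and dη^4 = a_1 η^{12} + a_2 η^{13} + a_3 η^{1 1̄} + a_4 η^{1 2̄} + a_5 η^{1 3̄} + a_6 η^{23} + a_7 η^{2 1̄} + a_8 η^{2 2̄} + a_9 η^{2 3̄} + a_{10} η^{3 1̄} + a_{11} η^{3 2̄} + a_{12} η^{3 3̄} with a_8 = 0. Then the invariant metric with fundamental form ω = (i/2) Σ_{j=1}^4 η^j ∧ η̄^j satisfies ∂∂̄ω = 0 if and only if a_1 = a_4 = a_6 = a_7 = a_9 = a_{11} = 0 and |a_2|² + |a_5|² + |a_{10}|² = 2 Re(a_3 ā_{12}). -/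

import Mathlib

/-!
STATEMENT 7: In the 2-step nilpotent Lie algebra with (1,0)-coframe η^1,…,η^4 satisfying
dη^i = 0 (i = 1,2,3) and
dη^4 = a₁η^{12} + a₂η^{13} + a₃η^{11̄} + a₄η^{12̄} + a₅η^{13̄} + a₆η^{23} + a₇η^{21̄}
      + a₈η^{22̄} + a₉η^{23̄} + a₁₀η^{31̄} + a₁₁η^{32̄} + a₁₂η^{33̄},  with a₈ = 0,
the metric ω = (i/2)Σ η^j ∧ η̄^j satisfies ∂∂̄ω = 0 iff
a₁ = a₄ = a₆ = a₇ = a₉ = a₁₁ = 0 and |a₂|² + |a₅|² + |a₁₀|² = 2 Re(a₃ ā₁₂).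
We model the bigraded differential algebra inside the exterior algebra over ℂ⁸, with
generators η^1,…,η^4, η̄^1,…,η̄^4 (zero-indexed), and ∂, ∂̄ the linear anti-derivations
determined by the structure equations (and their conjugates).
-/

open ExteriorAlgebra

noncomputable section

abbrev Λ8 : Type := ExteriorAlgebra ℂ (Fin 8 → ℂ)

/-- generators of the coframe -/
def gen (j : Fin 8) : Λ8 := ExteriorAlgebra.ι ℂ (Pi.single j 1)

/-- the (1,0)-forms η^1,…,η^4 (zero-indexed) -/
def eta (j : Fin 4) : Λ8 := gen (Fin.castAdd 4 j)

/-- the (0,1)-forms η̄^1,…,η̄^4 (zero-indexed) -/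
def etb (j : Fin 4) : Λ8 := gen (Fin.natAdd 4 j)

-- eta/etb as gen literals
@[simp] lemma etaE0 : eta 0 = gen 0 := rfl
@[simp] lemma etaE1 : eta 1 = gen 1 := rfl
@[simp] lemma etaE2 : eta 2 = gen 2 := rfl
@[simp] lemma etaE3 : eta 3 = gen 3 := rfl
@[simp] lemma etbE0 : etb 0 = gen 4 := rfl
@[simp] lemma etbE1 : etb 1 = gen 5 := rfl
@[simp] lemma etbE2 : etb 2 = gen 6 := rfl
@[simp] lemma etbE3 : etb 3 = gen 7 := rfl

lemma gsq (a : Fin 8) : gen a * gen a = 0 := ι_sq_zero _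

lemma sw2 (a b : Fin 8) : gen a * gen b = -(gen b * gen a) :=
  eq_neg_of_add_eq_zero_left (ι_add_mul_swap _ _)

lemma sw (a b : Fin 8) (x : Λ8) : gen a * (gen b * x) = -(gen b * (gen a * x)) := by
  rw [← mul_assoc, sw2, neg_mul, mul_assoc]

-- repeated-generator vanishing (simp lemmas for right-assoc monomials)
@[simp] lemma g12 (a : Fin 8) (x : Λ8) : gen a * (gen a * x) = 0 := by
  rw [← mul_assoc, gsq, zero_mul]
@[simp] lemma g12' (a : Fin 8) : gen a * gen a = 0 := gsq a
@[simp] lemma g13 (a b : Fin 8) (x : Λ8) : gen a * (gen b * (gen a * x)) = 0 := by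
  rw [sw b a x]; simp
@[simp] lemma g13' (a b : Fin 8) : gen a * (gen b * gen a) = 0 := by
  rw [sw2 b a, mul_neg, ← mul_assoc, gsq, zero_mul, neg_zero]
@[simp] lemma g14 (a b c : Fin 8) : gen a * (gen b * (gen c * gen a)) = 0 := by
  rw [sw2 c a]; simp
@[simp] lemma g24 (a b c : Fin 8) : gen a * (gen b * (gen c * gen b)) = 0 := by
  rw [g13', mul_zero]
@[simp] lemma g23 (a b : Fin 8) (x : Λ8) : gen a * (gen b * (gen b * x)) = 0 := by
  rw [g12, mul_zero]
@[simp] lemma g34 (a b c : Fin 8) : gen a * (gen b * (gen c * gen c)) = 0 := by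
  rw [gsq, mul_zero, mul_zero]

def coordA (S : Fin 4 → Fin 8) : (Fin 8 → ℂ) [⋀^Fin 4]→ₗ[ℂ] ℂ :=
  (Matrix.detRowAlternating (R := ℂ) (n := Fin 4)).compLinearMap (LinearMap.funLeft ℂ ℂ S)

def fam (S : Fin 4 → Fin 8) : ∀ i : ℕ, (Fin 8 → ℂ) [⋀^Fin i]→ₗ[ℂ] ℂ
  | 4 => coordA S
  | _ => 0

def φ (S : Fin 4 → Fin 8) : Λ8 →ₗ[ℂ] ℂ := ExteriorAlgebra.liftAlternating (fam S)

theorem phi_mono (S : Fin 4 → Fin 8) (v1 v2 v3 v4 : Fin 8 → ℂ) :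
    φ S (ExteriorAlgebra.ι ℂ v1 * (ExteriorAlgebra.ι ℂ v2 * (ExteriorAlgebra.ι ℂ v3 * ExteriorAlgebra.ι ℂ v4)))
      = coordA S ![v1, v2, v3, v4] := by
  rw [φ, liftAlternating_ι_mul, liftAlternating_ι_mul, liftAlternating_ι_mul, liftAlternating_ι]
  rfl

theorem phi_gen (S : Fin 4 → Fin 8) (a b c d : Fin 8) :
    φ S (gen a * (gen b * (gen c * gen d)))
      = Matrix.det (Matrix.of fun i j => ((Pi.single (![a,b,c,d] i) 1 : Fin 8 → ℂ) (S j))) := by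
  rw [gen, gen, gen, gen, phi_mono, coordA, AlternatingMap.compLinearMap_apply,
    Matrix.detRowAlternating]
  congr 1
  ext i j
  fin_cases i <;> rfl

theorem phi_zero1 (S : Fin 4 → Fin 8) (a b c d : Fin 8) (h : ∀ j, S j ≠ a) :
    φ S (gen a * (gen b * (gen c * gen d))) = 0 := by
  rw [phi_gen]; apply Matrix.det_eq_zero_of_row_eq_zero 0
  intro j; simp [Pi.single_apply, (h j)]
theorem phi_zero2 (S : Fin 4 → Fin 8) (a b c d : Fin 8) (h : ∀ j, S j ≠ b) :
    φ S (gen a * (gen b * (gen c * gen d))) = 0 := by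
  rw [phi_gen]; apply Matrix.det_eq_zero_of_row_eq_zero 1
  intro j; simp [Pi.single_apply, (h j)]
theorem phi_zero3 (S : Fin 4 → Fin 8) (a b c d : Fin 8) (h : ∀ j, S j ≠ c) :
    φ S (gen a * (gen b * (gen c * gen d))) = 0 := by
  rw [phi_gen]; apply Matrix.det_eq_zero_of_row_eq_zero 2
  intro j; simp [Pi.single_apply, (h j)]
theorem phi_zero4 (S : Fin 4 → Fin 8) (a b c d : Fin 8) (h : ∀ j, S j ≠ d) :
    φ S (gen a * (gen b * (gen c * gen d))) = 0 := by
  rw [phi_gen]; apply Matrix.det_eq_zero_of_row_eq_zero 3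
  intro j; simp [Pi.single_apply, (h j)]

-- precomputed coefficient functionals on the relevant monomials
@[simp] lemma phiM1a : φ ![0,1,4,5] (gen 0 * (gen 5 * (gen 4 * gen 1))) = -1 := by
  rw [phi_gen]; simp (config := { decide := true }) [Matrix.det_succ_row_zero, Fin.sum_univ_succ, Pi.single_apply]
@[simp] lemma phiM1b : φ ![0,1,4,5] (gen 1 * (gen 4 * (gen 5 * gen 0))) = -1 := by
  rw [phi_gen]; simp (config := { decide := true }) [Matrix.det_succ_row_zero, Fin.sum_univ_succ, Pi.single_apply]
@[simp] lemma phiM1c : φ ![0,1,4,5] (gen 0 * (gen 1 * (gen 4 * gen 5))) = 1 := by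
  rw [phi_gen]; simp (config := { decide := true }) [Matrix.det_succ_row_zero, Fin.sum_univ_succ, Pi.single_apply]
@[simp] lemma phiM2a : φ ![0,2,4,6] (gen 0 * (gen 6 * (gen 4 * gen 2))) = -1 := by
  rw [phi_gen]; simp (config := { decide := true }) [Matrix.det_succ_row_zero, Fin.sum_univ_succ, Pi.single_apply]
@[simp] lemma phiM2b : φ ![0,2,4,6] (gen 2 * (gen 4 * (gen 6 * gen 0))) = -1 := by
  rw [phi_gen]; simp (config := { decide := true }) [Matrix.det_succ_row_zero, Fin.sum_univ_succ, Pi.single_apply]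
@[simp] lemma phiM2c : φ ![0,2,4,6] (gen 0 * (gen 4 * (gen 6 * gen 2))) = 1 := by
  rw [phi_gen]; simp (config := { decide := true }) [Matrix.det_succ_row_zero, Fin.sum_univ_succ, Pi.single_apply]
@[simp] lemma phiM2d : φ ![0,2,4,6] (gen 2 * (gen 6 * (gen 4 * gen 0))) = 1 := by
  rw [phi_gen]; simp (config := { decide := true }) [Matrix.det_succ_row_zero, Fin.sum_univ_succ, Pi.single_apply]
@[simp] lemma phiM2e : φ ![0,2,4,6] (gen 0 * (gen 2 * (gen 4 * gen 6))) = 1 := by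
  rw [phi_gen]; simp (config := { decide := true }) [Matrix.det_succ_row_zero, Fin.sum_univ_succ, Pi.single_apply]
@[simp] lemma phiM3a : φ ![1,2,5,6] (gen 1 * (gen 6 * (gen 5 * gen 2))) = -1 := by
  rw [phi_gen]; simp (config := { decide := true }) [Matrix.det_succ_row_zero, Fin.sum_univ_succ, Pi.single_apply]
@[simp] lemma phiM3b : φ ![1,2,5,6] (gen 2 * (gen 5 * (gen 6 * gen 1))) = -1 := by
  rw [phi_gen]; simp (config := { decide := true }) [Matrix.det_succ_row_zero, Fin.sum_univ_succ, Pi.single_apply]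
@[simp] lemma phiM3c : φ ![1,2,5,6] (gen 1 * (gen 2 * (gen 5 * gen 6))) = 1 := by
  rw [phi_gen]; simp (config := { decide := true }) [Matrix.det_succ_row_zero, Fin.sum_univ_succ, Pi.single_apply]

-- reordering identities for the backward direction
lemma I2c : gen 0 * (gen 4 * (gen 6 * gen 2)) = gen 0 * (gen 2 * (gen 4 * gen 6)) := by
  simp only [sw2 6 2, sw 4 2, mul_neg, neg_neg]
lemma I2a : gen 0 * (gen 6 * (gen 4 * gen 2)) = -(gen 0 * (gen 2 * (gen 4 * gen 6))) := by
  simp only [sw2 4 2, sw 6 2, sw2 6 4, mul_neg, neg_neg]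
lemma I2b : gen 2 * (gen 4 * (gen 6 * gen 0)) = -(gen 0 * (gen 2 * (gen 4 * gen 6))) := by
  simp only [sw2 6 0, sw 4 0, sw 2 0, mul_neg, neg_neg]
lemma I2d : gen 2 * (gen 6 * (gen 4 * gen 0)) = gen 0 * (gen 2 * (gen 4 * gen 6)) := by
  simp only [sw2 4 0, sw 6 0, sw2 6 4, sw 2 0, mul_neg, neg_neg]


set_option maxHeartbeats 4000000 in
theorem statement7 (a1 a2 a3 a4 a5 a6 a7 a8 a9 a10 a11 a12 : ℂ) (h8 : a8 = 0)
    (del delbar : Λ8 →ₗ[ℂ] Λ8)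
    -- ∂ and ∂̄ are anti-derivations (odd Leibniz rule on products with 1-forms)
    (hdelL : ∀ (v : Fin 8 → ℂ) (y : Λ8),
      del (ExteriorAlgebra.ι ℂ v * y) = del (ExteriorAlgebra.ι ℂ v) * y
        - ExteriorAlgebra.ι ℂ v * del y)
    (hdelbarL : ∀ (v : Fin 8 → ℂ) (y : Λ8),
      delbar (ExteriorAlgebra.ι ℂ v * y) = delbar (ExteriorAlgebra.ι ℂ v) * y
        - ExteriorAlgebra.ι ℂ v * delbar y)
    (hdel1 : del 1 = 0) (hdelbar1 : delbar 1 = 0)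
    -- structure equations: dη^i = 0 for i = 1,2,3, and their conjugates
    (hclosed : ∀ j : Fin 4, j ≠ 3 →
      del (eta j) = 0 ∧ delbar (eta j) = 0 ∧ del (etb j) = 0 ∧ delbar (etb j) = 0)
    -- ∂η^4 and ∂̄η^4 are the (2,0)- and (1,1)-parts of dη^4
    (hdel4 : del (eta 3) =
      a1 • (eta 0 * eta 1) + a2 • (eta 0 * eta 2) + a6 • (eta 1 * eta 2))
    (hdelbar4 : delbar (eta 3) =
      a3 • (eta 0 * etb 0) + a4 • (eta 0 * etb 1) + a5 • (eta 0 * etb 2)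
      + a7 • (eta 1 * etb 0) + a8 • (eta 1 * etb 1) + a9 • (eta 1 * etb 2)
      + a10 • (eta 2 * etb 0) + a11 • (eta 2 * etb 1) + a12 • (eta 2 * etb 2))
    -- dη̄^4 = conjugate of dη^4, split into its (1,1)- and (0,2)-parts
    (hdelb4 : del (etb 3) =
      (starRingEnd ℂ a3) • (etb 0 * eta 0) + (starRingEnd ℂ a4) • (etb 0 * eta 1)
      + (starRingEnd ℂ a5) • (etb 0 * eta 2) + (starRingEnd ℂ a7) • (etb 1 * eta 0)
      + (starRingEnd ℂ a8) • (etb 1 * eta 1) + (starRingEnd ℂ a9) • (etb 1 * eta 2)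
      + (starRingEnd ℂ a10) • (etb 2 * eta 0) + (starRingEnd ℂ a11) • (etb 2 * eta 1)
      + (starRingEnd ℂ a12) • (etb 2 * eta 2))
    (hdelbarb4 : delbar (etb 3) =
      (starRingEnd ℂ a1) • (etb 0 * etb 1) + (starRingEnd ℂ a2) • (etb 0 * etb 2)
      + (starRingEnd ℂ a6) • (etb 1 * etb 2)) :
    -- ∂∂̄ω = 0 for ω = (i/2)Σ η^j ∧ η̄^j iff the stated conditions on the aᵢ hold
    del (delbar ((Complex.I / 2) • ∑ j : Fin 4, eta j * etb j)) = 0 ↔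
      (a1 = 0 ∧ a4 = 0 ∧ a6 = 0 ∧ a7 = 0 ∧ a9 = 0 ∧ a11 = 0 ∧
        ‖a2‖ ^ 2 + ‖a5‖ ^ 2 + ‖a10‖ ^ 2 =
          2 * (a3 * starRingEnd ℂ a12).re) := by
  subst h8
  have LdE : ∀ (j : Fin 4) (y : Λ8), del (eta j * y) = del (eta j) * y - eta j * del y := by
    intro j y; simp only [eta, gen]; exact hdelL _ y
  have LbE : ∀ (j : Fin 4) (y : Λ8), delbar (eta j * y) = delbar (eta j) * y - eta j * delbar y := by
    intro j y; simp only [eta, gen]; exact hdelbarL _ y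
  have LdB : ∀ (j : Fin 4) (y : Λ8), del (etb j * y) = del (etb j) * y - etb j * del y := by
    intro j y; simp only [etb, gen]; exact hdelL _ y
  have dE0 := (hclosed 0 (by decide)).1
  have dE1 := (hclosed 1 (by decide)).1
  have dE2 := (hclosed 2 (by decide)).1
  have bE0 := (hclosed 0 (by decide)).2.1
  have bE1 := (hclosed 1 (by decide)).2.1
  have bE2 := (hclosed 2 (by decide)).2.1
  have dB0 := (hclosed 0 (by decide)).2.2.1
  have dB1 := (hclosed 1 (by decide)).2.2.1
  have dB2 := (hclosed 2 (by decide)).2.2.1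
  have bB0 := (hclosed 0 (by decide)).2.2.2
  have bB1 := (hclosed 1 (by decide)).2.2.2
  have bB2 := (hclosed 2 (by decide)).2.2.2
  have h1 : delbar (∑ j : Fin 4, eta j * etb j)
      = delbar (eta 3) * etb 3 - eta 3 * delbar (etb 3) := by
    rw [Fin.sum_univ_four, map_add, map_add, map_add, LbE, LbE, LbE, LbE,
      bE0, bE1, bE2, bB0, bB1, bB2]
    simp
  have h2 : del (delbar (eta 3) * etb 3) = delbar (eta 3) * del (etb 3) := by
    rw [hdelbar4]
    simp only [add_mul, smul_mul_assoc, map_add, map_smul, mul_assoc, LdE, LdB,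
      dE0, dE1, dE2, dB0, dB1, dB2, zero_mul, zero_sub, sub_neg_eq_add, zero_add,
      mul_sub, mul_zero, sub_zero, mul_smul_comm, smul_mul_assoc, mul_neg, neg_neg]
  have h3 : del (eta 3 * delbar (etb 3)) = del (eta 3) * delbar (etb 3) := by
    rw [hdelbarb4]
    simp only [mul_add, mul_smul_comm, map_add, map_smul, LdE, LdB,
      dE0, dE1, dE2, dB0, dB1, dB2, zero_mul, zero_sub, sub_neg_eq_add, zero_add,
      mul_sub, mul_zero, sub_zero, smul_mul_assoc, mul_neg, neg_neg, sub_self, smul_zero, add_zero]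
  have hc : (Complex.I / 2 : ℂ) ≠ 0 := by
    simp [div_eq_zero_iff, Complex.I_ne_zero]
  rw [map_smul, map_smul, h1, map_sub, h2, h3]
  rw [show ∀ x : Λ8, (Complex.I/2) • x = 0 ↔ x = 0 from fun x =>
    ⟨fun h => by simpa [smul_smul, inv_mul_cancel₀ hc] using congrArg (fun z => (Complex.I/2)⁻¹ • z) h,
     fun h => by rw [h, smul_zero]⟩]
  constructor
  · intro hW
    rw [hdelbar4, hdel4, hdelb4, hdelbarb4] at hW
    have E1 := congrArg (φ ![0,1,4,5]) hW
    have E2 := congrArg (φ ![0,2,4,6]) hW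
    have E3 := congrArg (φ ![1,2,5,6]) hW
    clear hW
    simp only [map_zero, map_sub, map_add, map_smul, mul_add, add_mul, sub_mul, mul_sub,
      smul_mul_assoc, mul_smul_comm, smul_smul, mul_assoc, zero_smul, smul_zero,
      mul_zero, zero_mul, add_zero, zero_add, sub_zero, zero_sub,
      etaE0, etaE1, etaE2, etaE3, etbE0, etbE1, etbE2, etbE3,
      g12, g12', g13, g13', g14, g24, g23, g34, map_neg, neg_zero] at E1 E2 E3
    simp (config := { decide := true }) only [phi_zero1, phi_zero2, phi_zero3, phi_zero4,
      ne_eq, smul_zero, mul_zero, zero_mul, add_zero, zero_add, sub_zero, zero_sub,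
      neg_zero, smul_eq_mul] at E1 E2 E3
    simp only [phiM1a, phiM1b, phiM1c, phiM2a, phiM2b, phiM2c, phiM2d, phiM2e,
      phiM3a, phiM3b, phiM3c] at E1 E2 E3
    have r1 := congrArg Complex.re E1
    have r2 := congrArg Complex.re E2
    have r3 := congrArg Complex.re E3
    simp only [Complex.add_re, Complex.sub_re, Complex.neg_re, Complex.mul_re, Complex.mul_im,
      Complex.conj_re, Complex.conj_im, Complex.zero_re, Complex.neg_im,
      Complex.one_re, Complex.one_im] at r1 r2 r3
    norm_num at r1 r2 r3
    have z1 : Complex.normSq a1 = 0 := by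
      rw [Complex.normSq_apply]
      linarith [r1, mul_self_nonneg a1.re, mul_self_nonneg a1.im, mul_self_nonneg a4.re,
        mul_self_nonneg a4.im, mul_self_nonneg a7.re, mul_self_nonneg a7.im]
    have z4 : Complex.normSq a4 = 0 := by
      rw [Complex.normSq_apply]
      linarith [r1, mul_self_nonneg a1.re, mul_self_nonneg a1.im, mul_self_nonneg a4.re,
        mul_self_nonneg a4.im, mul_self_nonneg a7.re, mul_self_nonneg a7.im]
    have z7 : Complex.normSq a7 = 0 := by
      rw [Complex.normSq_apply]
      linarith [r1, mul_self_nonneg a1.re, mul_self_nonneg a1.im, mul_self_nonneg a4.re,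
        mul_self_nonneg a4.im, mul_self_nonneg a7.re, mul_self_nonneg a7.im]
    have z6 : Complex.normSq a6 = 0 := by
      rw [Complex.normSq_apply]
      linarith [r3, mul_self_nonneg a6.re, mul_self_nonneg a6.im, mul_self_nonneg a9.re,
        mul_self_nonneg a9.im, mul_self_nonneg a11.re, mul_self_nonneg a11.im]
    have z9 : Complex.normSq a9 = 0 := by
      rw [Complex.normSq_apply]
      linarith [r3, mul_self_nonneg a6.re, mul_self_nonneg a6.im, mul_self_nonneg a9.re,
        mul_self_nonneg a9.im, mul_self_nonneg a11.re, mul_self_nonneg a11.im]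
    have z11 : Complex.normSq a11 = 0 := by
      rw [Complex.normSq_apply]
      linarith [r3, mul_self_nonneg a6.re, mul_self_nonneg a6.im, mul_self_nonneg a9.re,
        mul_self_nonneg a9.im, mul_self_nonneg a11.re, mul_self_nonneg a11.im]
    refine ⟨Complex.normSq_eq_zero.mp z1, Complex.normSq_eq_zero.mp z4,
      Complex.normSq_eq_zero.mp z6, Complex.normSq_eq_zero.mp z7,
      Complex.normSq_eq_zero.mp z9, Complex.normSq_eq_zero.mp z11, ?_⟩
    simp only [Complex.sq_norm, Complex.normSq_apply, Complex.mul_re,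
      Complex.conj_re, Complex.conj_im]
    linarith [r2]
  · rintro ⟨h1', h4', h6', h7', h9', h11', hmod⟩
    subst h1' h4' h6' h7' h9' h11'
    rw [hdelbar4, hdel4, hdelb4, hdelbarb4]
    have hcoef : a3 * (starRingEnd ℂ) a12 + a12 * (starRingEnd ℂ) a3
        - a5 * (starRingEnd ℂ) a5 - a10 * (starRingEnd ℂ) a10 - a2 * (starRingEnd ℂ) a2 = 0 := by
      have hm' : a2.re * a2.re + a2.im * a2.im + (a5.re * a5.re + a5.im * a5.im)
          + (a10.re * a10.re + a10.im * a10.im)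
          = 2 * (a3.re * a12.re + a3.im * a12.im) := by
        have h := hmod
        simp only [Complex.sq_norm, Complex.normSq_apply, Complex.mul_re,
          Complex.conj_re, Complex.conj_im] at h
        linarith [h]
      rw [Complex.ext_iff]
      constructor
      · simp only [Complex.add_re, Complex.sub_re, Complex.mul_re,
          Complex.conj_re, Complex.conj_im, Complex.zero_re]
        linarith [hm']
      · simp only [Complex.add_im, Complex.sub_im, Complex.mul_im,
          Complex.conj_re, Complex.conj_im, Complex.zero_im]
        ring
    simp only [map_zero, zero_smul, smul_zero, add_zero, zero_add, mul_zero, zero_mul,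
      sub_zero, zero_sub, mul_add, add_mul, smul_mul_assoc, mul_smul_comm, smul_smul,
      mul_assoc, etaE0, etaE1, etaE2, etaE3, etbE0, etbE1, etbE2, etbE3,
      g12, g12', g13, g13', g14, g24, g23, g34, mul_neg, neg_neg, neg_zero, smul_neg]
    simp only [I2a, I2b, I2c, I2d, smul_neg]
    simp only [← neg_smul, ← add_smul, ← sub_smul]
    rw [show (starRingEnd ℂ) a3 * a12 + -((starRingEnd ℂ) a5 * a5) + -((starRingEnd ℂ) a10 * a10)
        + (starRingEnd ℂ) a12 * a3 - (starRingEnd ℂ) a2 * a2 = 0 from by linear_combination hcoef,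
      zero_smul]
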